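/- For any binary word X, N_{1001}(X) = N_1(X)·N_{100}(X) + N_{110}(X) − C(N_{10}(X), 2). In particular the count of the length-4 pattern 1001 is an algebraic (polynomial) function of pattern counts of length at most 3. -/
import Mathlib


def patCount (w X : List Bool) : ℕ := X.sublists.count w

lemma pc_sublists' (w X : List Bool) : patCount w X = X.sublists'.count w := by
  unfold patCount
  rw [List.count_eq_countP, List.count_eq_countP]
  exact (List.sublists_perm_sublists' X).countP_eq _

lemma pc_nil (w : List Bool) : patCount w [] = if w = [] then 1 else 0 := by
  cases w <;> simp [patCount]

lemma pc_nil_word (X : List Bool) : patCount [] X = 1 := by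
  induction X with
  | nil => simp [patCount]
  | cons a X ih =>
      rw [pc_sublists'] at *
      rw [List.sublists'_cons, List.count_append]
      have : List.count ([] : List Bool) (List.map (List.cons a) X.sublists') = 0 := by
        rw [List.count_eq_zero]
        intro h
        rcases List.mem_map.1 h with ⟨x, _, hx⟩
        simp at hx
      omega

lemma pc_cons_eq (a : Bool) (w X : List Bool) :
    patCount (a :: w) (a :: X) = patCount (a :: w) X + patCount w X := by
  rw [pc_sublists', pc_sublists', pc_sublists', List.sublists'_cons, List.count_append]
  congr 1
  rw [List.count_eq_countP, List.count_eq_countP, List.countP_map]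
  congr 1
  funext x
  simp

lemma pc_cons_ne (a b : Bool) (h : b ≠ a) (w X : List Bool) :
    patCount (b :: w) (a :: X) = patCount (b :: w) X := by
  rw [pc_sublists', pc_sublists', List.sublists'_cons, List.count_append]
  have : List.count (b :: w) (List.map (List.cons a) X.sublists') = 0 := by
    rw [List.count_eq_zero]
    intro hm
    rcases List.mem_map.1 hm with ⟨x, _, hx⟩
    apply h
    exact (List.cons_eq_cons.1 hx).1.symm
  omega

lemma pc_cons_ft (w X : List Bool) :
    patCount (false :: w) (true :: X) = patCount (false :: w) X :=
  pc_cons_ne true false (by simp) w X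

lemma pc_cons_tf (w X : List Bool) :
    patCount (true :: w) (false :: X) = patCount (true :: w) X :=
  pc_cons_ne false true (by simp) w X

lemma key (X : List Bool) :
    (2 * (patCount [true, false, false, true] X : ℤ)
      = 2 * patCount [true] X * patCount [true, false, false] X
        + 2 * patCount [true, true, false] X
        - patCount [true, false] X * (patCount [true, false] X - 1))
    ∧ (2 * (patCount [false, false, true] X : ℤ)
      = 2 * patCount [true] X * patCount [false, false] X
        + 2 * patCount [true, false, false] X + 2 * patCount [false, false] X
        + 2 * patCount [true, false] X
        - 2 * patCount [true, false] X * patCount [false] X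
        - patCount [false] X * (patCount [false] X - 1))
    ∧ ((patCount [true] X : ℤ) * patCount [false] X
        = patCount [true, false] X + patCount [false, true] X)
    ∧ (2 * (patCount [false, false] X : ℤ)
        = patCount [false] X * (patCount [false] X - 1)) := by
  induction X with
  | nil => simp [pc_nil]
  | cons a X ih =>
      obtain ⟨ih1, ih2, ih3, ih4⟩ := ih
      cases a
      · -- cons false
        simp only [pc_cons_eq, pc_cons_tf, pc_nil_word]
        push_cast
        exact ⟨by linear_combination ih1, by linear_combination ih2 - 2 * ih3,
          by linear_combination ih3, by linear_combination ih4⟩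
      · -- cons true
        simp only [pc_cons_eq, pc_cons_ft, pc_nil_word]
        push_cast
        exact ⟨by linear_combination ih1 + ih2, by linear_combination ih2 - 2 * ih4,
          by linear_combination ih3, by linear_combination ih4⟩

lemma two_choose_two (n : ℕ) : 2 * (Nat.choose n 2 : ℤ) = n * (n - 1) := by
  induction n with
  | zero => simp
  | succ m ih =>
      have h : (m + 1).choose 2 = m + m.choose 2 := by
        rw [Nat.choose_succ_succ]
        simp [Nat.choose_one_right]
      rw [h]
      push_cast
      linear_combination ih

theorem N1001_relation (X : List Bool) :
    (patCount [true, false, false, true] X : ℤ)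
      = (patCount [true] X : ℤ) * (patCount [true, false, false] X : ℤ)
        + (patCount [true, true, false] X : ℤ)
        - (Nat.choose (patCount [true, false] X) 2 : ℤ) := by
  have h1 := (key X).1
  have h2 := two_choose_two (patCount [true, false] X)
  linarith
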